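/- For a one-layer network: let Z ∈ ℝ^{n×d₀} be an input, σ a 1-Lipschitz elementwise activation with σ(0)=0, and W, W̃ ∈ ℝ^{d₀×d₁} weight matrices. Let H = σ(ZW), H̃ = σ(ZW̃), and assume m = min(‖H‖_F, ‖H̃‖_F) > 0. Then ‖HHᵀ/‖H‖_F² - H̃H̃ᵀ/‖H̃‖_F²‖_F ≤ (4‖Z‖_F/m)·‖W - W̃‖_F. -/

import Mathlib

open Matrix
set_option maxHeartbeats 1000000

attribute [local instance] Matrix.frobeniusSeminormedAddCommGroup
  Matrix.frobeniusNormedAddCommGroup Matrix.frobeniusNormedSpace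

noncomputable def frobNorm {m n : Type*} [Fintype m] [Fintype n] (A : Matrix m n ℝ) : ℝ :=
  Real.sqrt (∑ i, ∑ j, (A i j) ^ 2)

lemma frobNorm_eq_norm {m n : Type*} [Fintype m] [Fintype n] (A : Matrix m n ℝ) :
    frobNorm A = ‖A‖ := by
  rw [frobNorm, Matrix.frobenius_norm_def, Real.sqrt_eq_rpow]
  congr 1
  refine Finset.sum_congr rfl fun i _ => Finset.sum_congr rfl fun j _ => ?_
  rw [Real.norm_eq_abs, Real.rpow_two, sq_abs]

lemma lipschitz_map {m n : Type*} [Fintype m] [Fintype n]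
    (σ : ℝ → ℝ) (hσ : LipschitzWith 1 σ) (A B : Matrix m n ℝ) :
    ‖A.map σ - B.map σ‖ ≤ ‖A - B‖ := by
  rw [Matrix.frobenius_norm_def, Matrix.frobenius_norm_def]
  apply Real.rpow_le_rpow (by positivity) _ (by norm_num)
  apply Finset.sum_le_sum
  intro i _
  apply Finset.sum_le_sum
  intro j _
  apply Real.rpow_le_rpow (norm_nonneg _) _ (by norm_num)
  simp only [Matrix.sub_apply, Matrix.map_apply, Real.norm_eq_abs, ← Real.dist_eq]
  simpa using hσ.dist_le_mul (A i j) (B i j)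

theorem stmt_5 {n d₀ d₁ : ℕ} (Z : Matrix (Fin n) (Fin d₀) ℝ)
    (σ : ℝ → ℝ) (hσ : LipschitzWith 1 σ) (hσ0 : σ 0 = 0)
    (W W' : Matrix (Fin d₀) (Fin d₁) ℝ)
    (H H' : Matrix (Fin n) (Fin d₁) ℝ)
    (hH : H = (Z * W).map σ) (hH' : H' = (Z * W').map σ)
    (m : ℝ) (hm : m = min (frobNorm H) (frobNorm H')) (hmpos : 0 < m) :
    frobNorm ((frobNorm H ^ 2)⁻¹ • (H * Hᵀ) - (frobNorm H' ^ 2)⁻¹ • (H' * H'ᵀ))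
      ≤ (4 * frobNorm Z / m) * frobNorm (W - W') := by
  simp only [frobNorm_eq_norm] at *
  set a := ‖H‖ with ha
  set b := ‖H'‖ with hb
  have hma : m ≤ a := hm ▸ min_le_left _ _
  have hmb : m ≤ b := hm ▸ min_le_right _ _
  have hapos : 0 < a := lt_of_lt_of_le hmpos hma
  have hbpos : 0 < b := lt_of_lt_of_le hmpos hmb
  set D := ‖H - H'‖ with hD
  have hDnn : 0 ≤ D := norm_nonneg _
  -- D ≤ ‖Z‖ * ‖W - W'‖
  have hDb : D ≤ ‖Z‖ * ‖W - W'‖ := by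
    have h1 : D ≤ ‖Z * W - Z * W'‖ := by
      rw [hD, hH, hH']; exact lipschitz_map σ hσ _ _
    have h2 : ‖Z * W - Z * W'‖ ≤ ‖Z‖ * ‖W - W'‖ := by
      rw [← Matrix.mul_sub]; exact Matrix.frobenius_norm_mul Z (W - W')
    linarith
  set U := a⁻¹ • H with hU
  set V := b⁻¹ • H' with hV
  have hUn : ‖U‖ = 1 := by
    rw [hU, norm_smul, Real.norm_eq_abs, abs_of_pos (inv_pos.2 hapos)]
    field_simp
    rfl
  have hVn : ‖V‖ = 1 := by
    rw [hV, norm_smul, Real.norm_eq_abs, abs_of_pos (inv_pos.2 hbpos)]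
    field_simp
    rfl
  have hUV : ‖U - V‖ ≤ 2 * D / m := by
    have key : U - V = a⁻¹ • (H - H') + (a⁻¹ - b⁻¹) • H' := by
      rw [hU, hV, smul_sub, sub_smul]; abel
    have h1 : ‖a⁻¹ • (H - H')‖ = D / a := by
      rw [norm_smul, Real.norm_eq_abs, abs_of_pos (inv_pos.2 hapos), inv_mul_eq_div]
    have h2 : ‖(a⁻¹ - b⁻¹) • H'‖ ≤ D / a := by
      rw [norm_smul, Real.norm_eq_abs]
      have habsinv : |a⁻¹ - b⁻¹| = |b - a| / (a * b) := by
        rw [eq_div_iff (by positivity : (0:ℝ) < a * b).ne',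
          ← abs_of_pos (show (0:ℝ) < a * b by positivity), ← abs_mul]
        congr 1
        field_simp
      have habs : |b - a| ≤ D := by
        rw [hD]
        calc |b - a| = |‖H'‖ - ‖H‖| := rfl
          _ ≤ ‖H' - H‖ := abs_norm_sub_norm_le H' H
          _ = ‖H - H'‖ := by rw [← norm_neg]; congr 1; abel
      have hb' : ‖H'‖ = b := rfl
      rw [habsinv, hb']
      have : |b - a| / (a * b) * b = |b - a| / a := by field_simp
      rw [this]
      gcongr
    have hDa : D / a ≤ D / m := by gcongr
    calc ‖U - V‖ ≤ ‖a⁻¹ • (H - H')‖ + ‖(a⁻¹ - b⁻¹) • H'‖ := key ▸ norm_add_le _ _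
      _ ≤ D / a + D / a := by linarith
      _ ≤ D / m + D / m := by linarith
      _ = 2 * D / m := by ring
  have hrwU : (a ^ 2)⁻¹ • (H * Hᵀ) = U * Uᵀ := by
    ext i j
    simp only [hU, Matrix.smul_apply, Matrix.mul_apply, Matrix.transpose_apply,
      Finset.mul_sum, smul_eq_mul]
    refine Finset.sum_congr rfl fun k _ => ?_
    rw [sq, mul_inv]; ring
  have hrwV : (b ^ 2)⁻¹ • (H' * H'ᵀ) = V * Vᵀ := by
    ext i j
    simp only [hV, Matrix.smul_apply, Matrix.mul_apply, Matrix.transpose_apply,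
      Finset.mul_sum, smul_eq_mul]
    refine Finset.sum_congr rfl fun k _ => ?_
    rw [sq, mul_inv]; ring
  rw [hrwU, hrwV]
  have key2 : U * Uᵀ - V * Vᵀ = U * (U - V)ᵀ + (U - V) * Vᵀ := by
    rw [Matrix.transpose_sub, Matrix.mul_sub, Matrix.sub_mul]
    abel
  calc ‖U * Uᵀ - V * Vᵀ‖ ≤ ‖U * (U - V)ᵀ‖ + ‖(U - V) * Vᵀ‖ := key2 ▸ norm_add_le _ _
    _ ≤ ‖U‖ * ‖(U - V)ᵀ‖ + ‖U - V‖ * ‖Vᵀ‖ :=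
        add_le_add (Matrix.frobenius_norm_mul _ _) (Matrix.frobenius_norm_mul _ _)
    _ = 2 * ‖U - V‖ := by
        rw [Matrix.frobenius_norm_transpose, Matrix.frobenius_norm_transpose, hUn, hVn]
        ring
    _ ≤ 2 * (2 * D / m) := by linarith
    _ ≤ (4 * ‖Z‖ / m) * ‖W - W'‖ := by
        rw [div_mul_eq_mul_div, mul_assoc]
        have : 2 * (2 * D / m) = 4 * D / m := by ring
        rw [this]
        gcongr
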